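/- arXiv:2302.03552 — 4 statements merged into one kernel-verified Lean document; each statement's English description precedes it below -/
import Mathlib

section
/- Let n ≥ 2 and let Λ ⊆ S^n be a closed subset such that the open set Ω = S^n \ Λ satisfies the weak Koebe–Maskit condition. Let C be a circle in S^n that is not contained in the closure of any connected component of Ω. Then for every sequence of circles (C_k) in S^n converging to C, the set limsup (C_k ∩ Λ) contains at least two points. (This is the group-free form of the paper's Lemma 4.5: the limit set of a discrete subgroup of SO°(n+1,1) satisfying WKM enters only through the closed set Λ and its complement Ω.) -/
open Metric Set

set_option maxHeartbeats 1000000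
noncomputable section

/-- `Euc k` is the Euclidean space `ℝ^{k+1}`. -/
abbrev Euc (k : ℕ) : Type := EuclideanSpace ℝ (Fin (k+1))

/-- The unit sphere `S^k ⊆ ℝ^{k+1}`. -/
def unitSphere (k : ℕ) : Set (Euc k) := Metric.sphere 0 1

/-- A circle in `S^n`: the intersection of `S^n` with a 2-dimensional affine
subspace of `ℝ^{n+1}`, provided this intersection is infinite. -/
def IsCircle (n : ℕ) (C : Set (Euc n)) : Prop :=
  ∃ P : AffineSubspace ℝ (Euc n),
    Module.finrank ℝ P.direction = 2 ∧ C = unitSphere n ∩ (P : Set (Euc n)) ∧ C.Infinite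

/-- A codimension-one sphere in `S^m`: the intersection of `S^m` with an
`m`-dimensional affine subspace of `ℝ^{m+1}`, provided it is infinite. -/
def IsCodimOneSphere (m : ℕ) (S : Set (Euc m)) : Prop :=
  ∃ H : AffineSubspace ℝ (Euc m),
    Module.finrank ℝ H.direction = m ∧ S = unitSphere m ∩ (H : Set (Euc m)) ∧ S.Infinite

/-- Convergence of a sequence of subsets in the Hausdorff distance. -/
def SetsConvergeTo {X : Type*} [MetricSpace X] (K : ℕ → Set X) (L : Set X) : Prop :=
  Filter.Tendsto (fun k => Metric.hausdorffDist (K k) L) Filter.atTop (nhds 0)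

/-- `limsup` of a sequence of sets: `⋂_N closure (⋃_{k ≥ N} S_k)`. -/
def setLimsup {X : Type*} [TopologicalSpace X] (S : ℕ → Set X) : Set X :=
  ⋂ N : ℕ, closure (⋃ k ≥ N, S k)

/-- The weak Koebe–Maskit condition: for every `ε > 0`, only finitely many
connected components of `Ω` have diameter greater than `ε`. -/
def WKM {X : Type*} [MetricSpace X] (Ω : Set X) : Prop :=
  ∀ ε > 0, {U : Set X | (∃ x ∈ Ω, U = connectedComponentIn Ω x) ∧ ε < Metric.diam U}.Finite

/-- `Λ ⊆ S^n` is doubly stable if every `ξ ∈ Λ` lies on a circle `C` such that for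
every sequence of circles converging to `C` the limsup of the slices `C_k ∩ Λ`
contains at least two points. -/
def DoublyStable (n : ℕ) (Λ : Set (Euc n)) : Prop :=
  ∀ ξ ∈ Λ, ∃ C : Set (Euc n), IsCircle n C ∧ ξ ∈ C ∧
    ∀ Ck : ℕ → Set (Euc n), (∀ k, IsCircle n (Ck k)) → SetsConvergeTo Ck C →
      (setLimsup (fun k => Ck k ∩ Λ)).Nontrivial


open Real

lemma exists_cos_sin (a b : ℝ) :
    ∃ θ : ℝ, a = Real.sqrt (a^2 + b^2) * Real.cos θ ∧ b = Real.sqrt (a^2 + b^2) * Real.sin θ := by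
  have h := Complex.norm_mul_cos_arg (Complex.I * b + a)
  have h2 := Complex.norm_mul_sin_arg (Complex.I * b + a)
  have habs : ‖Complex.I * b + a‖ = Real.sqrt (a^2+b^2) := by
    rw [Complex.norm_def, Complex.normSq_apply]
    simp [pow_two]
  have hre : (Complex.I * b + a).re = a := by simp
  have him : (Complex.I * b + a).im = b := by simp
  rw [habs, hre] at h
  rw [habs, him] at h2
  exact ⟨_, h.symm, h2.symm⟩


lemma norm_combo_sq {E : Type*} [NormedAddCommGroup E] [InnerProductSpace ℝ E]
    {u v : E} (hu : ‖u‖ = 1) (hv : ‖v‖ = 1) (huv : inner ℝ u v = (0:ℝ))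
    (a b : ℝ) : ‖a • u + b • v‖^2 = a^2 + b^2 := by
  rw [norm_add_sq_real, norm_smul, norm_smul, real_inner_smul_left, real_inner_smul_right, huv,
    hu, hv]
  simp [mul_pow, sq_abs]

lemma dist_sq_param {E : Type*} [NormedAddCommGroup E] [InnerProductSpace ℝ E]
    {u v : E} (hu : ‖u‖ = 1) (hv : ‖v‖ = 1) (huv : inner ℝ u v = (0:ℝ))
    (p ξ : E) (r : ℝ) : ∃ a b : ℝ, ∀ θ : ℝ,
      dist (p + (r * Real.cos θ) • u + (r * Real.sin θ) • v) ξ ^ 2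
        = (‖p - ξ‖^2 + r^2) + a * Real.cos θ + b * Real.sin θ := by
  refine ⟨2 * r * inner ℝ (p - ξ) u, 2 * r * inner ℝ (p - ξ) v, fun θ => ?_⟩
  have hre : p + (r * Real.cos θ) • u + (r * Real.sin θ) • v - ξ
      = (p - ξ) + ((r * Real.cos θ) • u + (r * Real.sin θ) • v) := by abel
  rw [dist_eq_norm, hre, norm_add_sq_real, norm_combo_sq hu hv huv, inner_add_right,
    real_inner_smul_right, real_inner_smul_right]
  have hcs := Real.sin_sq_add_cos_sq θ
  ring_nf
  nlinarith [hcs]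

lemma le_of_sq_le_sq' {r d : ℝ} (hd : 0 ≤ d) (h : r^2 ≤ d^2) : r ≤ d :=
  le_of_pow_le_pow_left₀ two_ne_zero hd h



lemma preconnected_image_cos_sin {E : Type*} [TopologicalSpace E] (g : ℝ → E)
    (hg : Continuous g)
    (hper : ∀ θ₁ θ₂ : ℝ, Real.cos θ₁ = Real.cos θ₂ → Real.sin θ₁ = Real.sin θ₂ → g θ₁ = g θ₂)
    (a b c : ℝ) : IsPreconnected (g '' {θ | c < a * Real.cos θ + b * Real.sin θ}) := by
  obtain ⟨φ, ha, hb⟩ := exists_cos_sin a b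
  set R := Real.sqrt (a^2+b^2) with hR
  have hkey : ∀ θ, a * Real.cos θ + b * Real.sin θ = R * Real.cos (θ - φ) := by
    intro θ; rw [Real.cos_sub, ha, hb]; ring
  have hwhole : IsPreconnected (g '' univ) := isPreconnected_univ.image g hg.continuousOn
  rcases eq_or_lt_of_le (Real.sqrt_nonneg (a^2+b^2)) with h0 | hRpos
  · have hR0 : R = 0 := h0.symm
    by_cases hc : c < 0
    · have hset : {θ | c < a * Real.cos θ + b * Real.sin θ} = univ := by
        apply eq_univ_of_forall
        intro θ; rw [mem_setOf_eq, hkey, hR0]; simpa using hc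
      rw [hset]; exact hwhole
    · have hset : {θ | c < a * Real.cos θ + b * Real.sin θ} = ∅ := by
        apply eq_empty_of_forall_notMem
        intro θ; rw [mem_setOf_eq, hkey, hR0]; simpa using hc
      rw [hset]; simp [isPreconnected_empty]
  · set t := c / R with htdef
    have hct : c = R * t := by rw [htdef]; field_simp [show R ≠ 0 from hRpos.ne']
    by_cases ht1 : t < -1
    · have hset : {θ | c < a * Real.cos θ + b * Real.sin θ} = univ := by
        apply eq_univ_of_forall
        intro θ; rw [mem_setOf_eq, hkey, hct]
        have := Real.neg_one_le_cos (θ - φ)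
        nlinarith
      rw [hset]; exact hwhole
    by_cases ht2 : 1 ≤ t
    · have hset : {θ | c < a * Real.cos θ + b * Real.sin θ} = ∅ := by
        apply eq_empty_of_forall_notMem
        intro θ; rw [mem_setOf_eq, hkey, hct]
        have := Real.cos_le_one (θ - φ)
        nlinarith
      rw [hset]; simp [isPreconnected_empty]
    push_neg at ht1 ht2
    set α := Real.arccos t with hαdef
    have hα0 : 0 < α := Real.arccos_pos.2 ht2
    have hαπ : α ≤ π := Real.arccos_le_pi t
    have hcosα : Real.cos α = t := Real.cos_arccos ht1 ht2.le
    have himg : g '' {θ | c < a * Real.cos θ + b * Real.sin θ} = g '' (Ioo (φ - α) (φ + α)) := by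
      apply Set.Subset.antisymm
      · rintro _ ⟨θ, hθ, rfl⟩
        rw [mem_setOf_eq, hkey, hct] at hθ
        have hx : t < Real.cos (θ - φ) := lt_of_mul_lt_mul_left hθ hRpos.le
        set x := θ - φ with hxdef
        set z := Real.arccos (Real.cos x) with hzdef
        have hz0 : 0 ≤ z := Real.arccos_nonneg _
        have hzπ : z ≤ π := Real.arccos_le_pi _
        have hcz : Real.cos z = Real.cos x :=
          Real.cos_arccos (Real.neg_one_le_cos x) (Real.cos_le_one x)
        have hzα : z < α := by
          by_contra hge
          push_neg at hge
          have := Real.cos_le_cos_of_nonneg_of_le_pi (le_of_lt hα0) hzπ hge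
          rw [hcz, hcosα] at this
          linarith
        have hsz : Real.sin z = |Real.sin x| := by
          rw [hzdef, Real.sin_arccos,
            show (1 : ℝ) - Real.cos x ^ 2 = Real.sin x ^ 2 by
              nlinarith [Real.sin_sq_add_cos_sq x],
            Real.sqrt_sq_eq_abs]
        set s := if 0 ≤ Real.sin x then z else -z with hsdef
        have hcs : Real.cos s = Real.cos x := by
          by_cases h : 0 ≤ Real.sin x <;> simp [hsdef, h, Real.cos_neg, hcz]
        have hss : Real.sin s = Real.sin x := by
          by_cases h : 0 ≤ Real.sin x <;>
            simp [hsdef, h, Real.sin_neg, hsz, abs_of_nonneg, abs_of_neg, le_of_not_ge] <;>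
          · rw [abs_of_neg (lt_of_not_ge h)]; ring
        have habs : |s| = z := by
          by_cases h : 0 ≤ Real.sin x <;> simp [hsdef, h, abs_of_nonneg hz0]
        refine ⟨φ + s, ?_, ?_⟩
        · have h1 : |s| < α := habs ▸ hzα
          rw [abs_lt] at h1
          constructor <;> [linarith [h1.1]; linarith [h1.2]]
        · apply hper
          · have hθeq : θ = φ + x := by rw [hxdef]; ring
            rw [hθeq, Real.cos_add, Real.cos_add, hcs, hss]
          · have hθeq : θ = φ + x := by rw [hxdef]; ring
            rw [hθeq, Real.sin_add, Real.sin_add, hcs, hss]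
      · rintro _ ⟨θ, hθ, rfl⟩
        refine ⟨θ, ?_, rfl⟩
        rw [mem_setOf_eq, hkey, hct]
        obtain ⟨h1, h2⟩ := hθ
        have habs : |θ - φ| < α := by rw [abs_lt]; constructor <;> linarith
        have := Real.cos_lt_cos_of_nonneg_of_le_pi (abs_nonneg (θ - φ)) hαπ habs
        rw [Real.cos_abs] at this
        rw [← hcosα]
        exact mul_lt_mul_of_pos_left this hRpos
    rw [himg]
    exact isPreconnected_Ioo.image g hg.continuousOn


section CircleFacts

variable {E : Type*} [NormedAddCommGroup E] [InnerProductSpace ℝ E]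
variable {u v : E} (hu : ‖u‖ = 1) (hv : ‖v‖ = 1) (huv : inner ℝ u v = (0:ℝ)) (p : E) (r : ℝ)

lemma circle_cont : Continuous (fun θ : ℝ => p + (r * Real.cos θ) • u + (r * Real.sin θ) • v) := by
  fun_prop

include hu hv huv in
lemma circle_dist_sq (θ₁ θ₂ : ℝ) :
    dist (p + (r * Real.cos θ₁) • u + (r * Real.sin θ₁) • v)
        (p + (r * Real.cos θ₂) • u + (r * Real.sin θ₂) • v) ^ 2
      = (r * Real.cos θ₁ - r * Real.cos θ₂)^2 + (r * Real.sin θ₁ - r * Real.sin θ₂)^2 := by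
  rw [dist_eq_norm]
  have hd : p + (r * Real.cos θ₁) • u + (r * Real.sin θ₁) • v
      - (p + (r * Real.cos θ₂) • u + (r * Real.sin θ₂) • v)
      = (r * Real.cos θ₁ - r * Real.cos θ₂) • u + (r * Real.sin θ₁ - r * Real.sin θ₂) • v := by
    rw [sub_smul, sub_smul]; abel
  rw [hd, norm_combo_sq hu hv huv]

include hu hv huv in
lemma circle_far_points (hr : 0 < r) (ξ : E) :
    ∃ q₁ q₃ : E,
      q₁ ∈ Set.range (fun θ : ℝ => p + (r * Real.cos θ) • u + (r * Real.sin θ) • v) ∧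
      q₃ ∈ Set.range (fun θ : ℝ => p + (r * Real.cos θ) • u + (r * Real.sin θ) • v) ∧
      r ≤ dist q₁ ξ ∧ r ≤ dist q₃ ξ ∧ r ≤ dist q₁ q₃ := by
  set f := fun θ : ℝ => p + (r * Real.cos θ) • u + (r * Real.sin θ) • v with hf
  obtain ⟨a, b, hab⟩ := dist_sq_param hu hv huv p ξ r
  have key : ∀ θ : ℝ, dist (f θ) ξ ^ 2
      = (‖p - ξ‖^2 + r^2) + a * Real.cos θ + b * Real.sin θ := hab
  have kd : ∀ θ₁ θ₂ : ℝ, dist (f θ₁) (f θ₂) ^ 2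
      = (r * Real.cos θ₁ - r * Real.cos θ₂)^2 + (r * Real.sin θ₁ - r * Real.sin θ₂)^2 :=
    circle_dist_sq hu hv huv p r
  have h0 := key 0
  have hπ := key π
  have hh := key (π/2)
  have hmh := key (-(π/2))
  rw [Real.cos_zero, Real.sin_zero] at h0
  rw [Real.cos_pi, Real.sin_pi] at hπ
  rw [Real.cos_pi_div_two, Real.sin_pi_div_two] at hh
  rw [Real.cos_neg, Real.sin_neg, Real.cos_pi_div_two, Real.sin_pi_div_two] at hmh
  have hA : r^2 ≤ ‖p - ξ‖^2 + r^2 := by nlinarith [sq_nonneg ‖p - ξ‖]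
  have hq1 : ∃ θ₁ ∈ ({0, π} : Set ℝ), r ≤ dist (f θ₁) ξ := by
    rcases le_or_gt 0 a with h | h
    · exact ⟨0, by simp, le_of_sq_le_sq' dist_nonneg (by nlinarith)⟩
    · exact ⟨π, by simp, le_of_sq_le_sq' dist_nonneg (by nlinarith)⟩
  have hq3 : ∃ θ₃ ∈ ({π/2, -(π/2)} : Set ℝ), r ≤ dist (f θ₃) ξ := by
    rcases le_or_gt 0 b with h | h
    · exact ⟨π/2, by simp, le_of_sq_le_sq' dist_nonneg (by nlinarith)⟩
    · exact ⟨-(π/2), by simp, le_of_sq_le_sq' dist_nonneg (by nlinarith)⟩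
  obtain ⟨θ₁, hθ₁, hd1⟩ := hq1
  obtain ⟨θ₃, hθ₃, hd3⟩ := hq3
  refine ⟨f θ₁, f θ₃, ⟨θ₁, rfl⟩, ⟨θ₃, rfl⟩, hd1, hd3, ?_⟩
  apply le_of_sq_le_sq' dist_nonneg
  rw [kd]
  rcases hθ₁ with h1 | h1 <;> rcases hθ₃ with h3 | h3 <;>
    subst h1 <;> subst h3 <;>
    simp [Real.cos_pi, Real.sin_pi, Real.cos_pi_div_two, Real.sin_pi_div_two] <;>
    nlinarith


include hu hv huv in
lemma circle_diff_ball_preconnected (ξ : E) {ε : ℝ} (hε : 0 < ε) :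
    IsPreconnected ((Set.range fun θ : ℝ => p + (r * Real.cos θ) • u + (r * Real.sin θ) • v)
      \ closedBall ξ ε) := by
  set f := fun θ : ℝ => p + (r * Real.cos θ) • u + (r * Real.sin θ) • v with hf
  have hcont : Continuous f := circle_cont p r
  obtain ⟨a, b, hab⟩ := dist_sq_param hu hv huv p ξ r
  have key : ∀ θ : ℝ, dist (f θ) ξ ^ 2
      = (‖p - ξ‖^2 + r^2) + a * Real.cos θ + b * Real.sin θ := hab
  have hset : (Set.range f) \ closedBall ξ ε
      = f '' {θ | (ε^2 - (‖p - ξ‖^2 + r^2)) < a * Real.cos θ + b * Real.sin θ} := by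
    have hpre : f ⁻¹' (closedBall ξ ε)ᶜ
        = {θ | (ε^2 - (‖p - ξ‖^2 + r^2)) < a * Real.cos θ + b * Real.sin θ} := by
      ext θ
      rw [Set.mem_preimage, Set.mem_compl_iff, Metric.mem_closedBall, not_le, Set.mem_setOf_eq]
      constructor
      · intro h
        have h2 : ε^2 < dist (f θ) ξ ^ 2 :=
          pow_lt_pow_left₀ h hε.le two_ne_zero
        rw [key] at h2
        linarith
      · intro h
        have h2 : ε^2 < dist (f θ) ξ ^ 2 := by rw [key]; linarith
        by_contra hcon
        push_neg at hcon
        have := pow_le_pow_left₀ dist_nonneg hcon 2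
        linarith
    rw [diff_eq, ← Set.image_preimage_eq_range_inter, hpre]
  rw [hset]
  exact preconnected_image_cos_sin f hcont
    (fun θ₁ θ₂ hc hs => by simp only [hf, hc, hs]) a b _

include hu hv huv in
lemma circle_perfect (hr : 0 < r) :
    ∀ x ∈ Set.range (fun θ : ℝ => p + (r * Real.cos θ) • u + (r * Real.sin θ) • v),
      x ∈ closure ((Set.range (fun θ : ℝ =>
        p + (r * Real.cos θ) • u + (r * Real.sin θ) • v)) \ {x}) := by
  set f := fun θ : ℝ => p + (r * Real.cos θ) • u + (r * Real.sin θ) • v with hf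
  have hcont : Continuous f := circle_cont p r
  have kd : ∀ θ₁ θ₂ : ℝ, dist (f θ₁) (f θ₂) ^ 2
      = (r * Real.cos θ₁ - r * Real.cos θ₂)^2 + (r * Real.sin θ₁ - r * Real.sin θ₂)^2 :=
    circle_dist_sq hu hv huv p r
  rintro _ ⟨θ₀, rfl⟩
  apply mem_closure_of_tendsto
    (f := fun m : ℕ => f (θ₀ + 1/(m+1)))
    (b := Filter.atTop)
  · have h1 : Filter.Tendsto (fun m : ℕ => θ₀ + 1/(m+1 : ℝ)) Filter.atTop (nhds θ₀) := by
      have := tendsto_one_div_add_atTop_nhds_zero_nat (𝕜 := ℝ)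
      have h2 := Filter.Tendsto.add (tendsto_const_nhds (x := θ₀) (f := Filter.atTop)) this
      simpa using h2
    exact (hcont.tendsto θ₀).comp h1
  · apply Filter.Eventually.of_forall
    intro m
    refine ⟨⟨_, rfl⟩, ?_⟩
    simp only [mem_singleton_iff]
    intro heq
    set h : ℝ := 1/(m+1 : ℝ) with hh_def
    have hhpos : 0 < h := by positivity
    have hhle : h ≤ 1 := by
      rw [hh_def]
      rw [div_le_one (by positivity)]
      linarith [Nat.cast_nonneg (α := ℝ) m]
    have hd0 : dist (f (θ₀ + h)) (f θ₀) = 0 := by rw [heq]; simp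
    have hsq := kd (θ₀ + h) θ₀
    rw [hd0] at hsq
    have hc : Real.cos (θ₀ + h) = Real.cos θ₀ := by
      have h1 : (r * Real.cos (θ₀+h) - r * Real.cos θ₀)^2 = 0 := by
        nlinarith [sq_nonneg (r * Real.cos (θ₀+h) - r * Real.cos θ₀),
          sq_nonneg (r * Real.sin (θ₀+h) - r * Real.sin θ₀)]
      have h2 : r * Real.cos (θ₀+h) - r * Real.cos θ₀ = 0 := sq_eq_zero_iff.1 h1
      have h3 : r * (Real.cos (θ₀+h) - Real.cos θ₀) = 0 := by rw [mul_sub]; exact h2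
      rcases mul_eq_zero.1 h3 with h4 | h4
      · exact absurd h4 hr.ne'
      · exact sub_eq_zero.1 h4
    have hs : Real.sin (θ₀ + h) = Real.sin θ₀ := by
      have h1 : (r * Real.sin (θ₀+h) - r * Real.sin θ₀)^2 = 0 := by
        nlinarith [sq_nonneg (r * Real.cos (θ₀+h) - r * Real.cos θ₀),
          sq_nonneg (r * Real.sin (θ₀+h) - r * Real.sin θ₀)]
      have h2 : r * Real.sin (θ₀+h) - r * Real.sin θ₀ = 0 := sq_eq_zero_iff.1 h1
      have h3 : r * (Real.sin (θ₀+h) - Real.sin θ₀) = 0 := by rw [mul_sub]; exact h2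
      rcases mul_eq_zero.1 h3 with h4 | h4
      · exact absurd h4 hr.ne'
      · exact sub_eq_zero.1 h4
    have hch : Real.cos h = 1 := by
      have : Real.cos ((θ₀ + h) - θ₀) = 1 := by
        rw [Real.cos_sub, hc, hs]
        nlinarith [Real.sin_sq_add_cos_sq θ₀]
      simpa using this
    have h2pi : (1:ℝ) < 2 * π := by nlinarith [Real.pi_gt_three]
    have := (Real.cos_eq_one_iff_of_lt_of_lt (by linarith) (by linarith)).1 hch
    linarith

end CircleFacts

lemma isCircle_param {n : ℕ} {C : Set (Euc n)} (h : IsCircle n C) :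
    ∃ (p u v : Euc n) (r : ℝ), 0 < r ∧ ‖u‖ = 1 ∧ ‖v‖ = 1 ∧ inner ℝ u v = (0:ℝ) ∧
      C = Set.range (fun θ : ℝ =>
        p + (r * Real.cos θ) • u + (r * Real.sin θ) • v) := by
  obtain ⟨P, hdim, hCeq, hinf⟩ := h
  obtain ⟨c0, hc0⟩ := hinf.nonempty
  have hc0P : c0 ∈ (P : Set (Euc n)) := (hCeq ▸ hc0).2
  haveI : Nonempty P := ⟨⟨c0, hc0P⟩⟩
  let o : OrthonormalBasis (Fin 2) ℝ P.direction :=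
    (stdOrthonormalBasis ℝ P.direction).reindex (finCongr (by rw [hdim]))
  set u : Euc n := (o 0 : Euc n) with hu_def
  set v : Euc n := (o 1 : Euc n) with hv_def
  have hu : ‖u‖ = 1 := o.orthonormal.1 0
  have hv : ‖v‖ = 1 := o.orthonormal.1 1
  have huv : inner ℝ u v = (0:ℝ) := by
    have h2 : inner ℝ (o 0) (o 1) = (0:ℝ) := o.orthonormal.2 (show (0 : Fin 2) ≠ 1 by decide)
    rw [Submodule.coe_inner] at h2
    exact h2
  have huV : u ∈ P.direction := SetLike.coe_mem _
  have hvV : v ∈ P.direction := SetLike.coe_mem _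
  set p : Euc n := (EuclideanGeometry.orthogonalProjection P (0 : Euc n) : Euc n) with hp_def
  have hpP : p ∈ (P : Set (Euc n)) := (EuclideanGeometry.orthogonalProjection P (0 : Euc n)).2
  have hperp : ∀ w ∈ P.direction, inner ℝ p w = (0:ℝ) := by
    intro w hw
    have hmem := EuclideanGeometry.vsub_orthogonalProjection_mem_direction_orthogonal P (0 : Euc n)
    have := (Submodule.mem_orthogonal _ _).1 hmem w hw
    have h0p : (0 : Euc n) -ᵥ p = -p := by simp [vsub_eq_sub]
    rw [h0p, inner_neg_right] at this
    rw [real_inner_comm]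
    linarith [this]
  have hnormid : ∀ x ∈ (P : Set (Euc n)), ‖x‖^2 = ‖p‖^2 + ‖x - p‖^2 := by
    intro x hx
    have hd : x - p ∈ P.direction := AffineSubspace.vsub_mem_direction hx hpP
    have : x = p + (x - p) := by abel
    rw [this, norm_add_sq_real, hperp _ hd]
    ring_nf
    abel
  have hx1 : ∀ x ∈ C, ‖x‖ = 1 := by
    intro x hx
    have := (hCeq ▸ hx).1
    rwa [unitSphere, mem_sphere_zero_iff_norm] at this
  have hxr : ∀ x ∈ C, ‖x - p‖^2 = 1 - ‖p‖^2 := by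
    intro x hx
    have h1 := hnormid x (hCeq ▸ hx).2
    rw [hx1 x hx] at h1
    linarith
  have hpos : 0 < 1 - ‖p‖^2 := by
    by_contra hle
    push_neg at hle
    apply hinf
    apply Set.Finite.subset (finite_singleton p)
    intro x hx
    have h1 := hxr x hx
    have h2 : ‖x - p‖^2 ≤ 0 := by linarith
    have h3 : ‖x - p‖ = 0 := by nlinarith [norm_nonneg (x - p)]
    have : x - p = 0 := by rwa [norm_eq_zero] at h3
    simp [sub_eq_zero.1 this]
  set r : ℝ := Real.sqrt (1 - ‖p‖^2) with hr_def
  have hr : 0 < r := Real.sqrt_pos.2 hpos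
  have hr2 : r^2 = 1 - ‖p‖^2 := Real.sq_sqrt hpos.le
  refine ⟨p, u, v, r, hr, hu, hv, huv, ?_⟩
  ext x
  constructor
  · intro hx
    have hwV : x - p ∈ P.direction := AffineSubspace.vsub_mem_direction (hCeq ▸ hx).2 hpP
    set w' : P.direction := ⟨x - p, hwV⟩ with hw'_def
    have hexp := o.sum_repr w'
    rw [Fin.sum_univ_two] at hexp
    set a := o.repr w' 0 with ha_def
    set b := o.repr w' 1 with hb_def
    have hab : a • u + b • v = x - p := by
      have := congrArg (Subtype.val) hexp
      simpa using this
    have habn : a^2 + b^2 = r^2 := by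
      rw [← norm_combo_sq hu hv huv a b, hab, hxr x hx, hr2]
    have hsq : Real.sqrt (a^2 + b^2) = r := by
      rw [habn, Real.sqrt_sq hr.le]
    obtain ⟨θ, hca, hcb⟩ := exists_cos_sin a b
    rw [hsq] at hca hcb
    refine ⟨θ, ?_⟩
    simp only
    rw [← hca, ← hcb, ]
    rw [show p + a • u + b • v = p + (a • u + b • v) by abel, hab]
    abel
  · rintro ⟨θ, rfl⟩
    simp only
    set w : Euc n := (r * Real.cos θ) • u + (r * Real.sin θ) • v with hw_def
    have hwd : w ∈ P.direction := by
      exact Submodule.add_mem _ (Submodule.smul_mem _ _ huV) (Submodule.smul_mem _ _ hvV)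
    have hfP : p + (r * Real.cos θ) • u + (r * Real.sin θ) • v ∈ (P : Set (Euc n)) := by
      have h1 : w +ᵥ p ∈ P := AffineSubspace.vadd_mem_of_mem_direction hwd hpP
      have h2 : w +ᵥ p = p + (r * Real.cos θ) • u + (r * Real.sin θ) • v := by
        rw [vadd_eq_add, hw_def]; abel
      rwa [h2] at h1
    have hnw : ‖w‖^2 = r^2 := by
      rw [hw_def, norm_combo_sq hu hv huv]
      nlinarith [Real.sin_sq_add_cos_sq θ]
    have hsphere : p + (r * Real.cos θ) • u + (r * Real.sin θ) • v ∈ unitSphere n := by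
      have hid := hnormid _ hfP
      have hsub : p + (r * Real.cos θ) • u + (r * Real.sin θ) • v - p = w := by
        rw [hw_def]; abel
      rw [hsub, hnw, hr2] at hid
      rw [unitSphere, mem_sphere_zero_iff_norm]
      have : ‖p + (r * Real.cos θ) • u + (r * Real.sin θ) • v‖^2 = 1 := by linarith
      calc ‖p + (r * Real.cos θ) • u + (r * Real.sin θ) • v‖
          = Real.sqrt (‖p + (r * Real.cos θ) • u + (r * Real.sin θ) • v‖^2) :=
            (Real.sqrt_sq (norm_nonneg _)).symm
        _ = 1 := by rw [this, Real.sqrt_one]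
    rw [hCeq]
    exact ⟨hsphere, hfP⟩

/-- Group-free form of Lemma 4.5: if `Ω = S^n \ Λ` satisfies WKM and the circle `C`
is not contained in the closure of any connected component of `Ω`, then for any
sequence of circles `C_k → C`, `limsup (C_k ∩ Λ)` has at least two points. -/
theorem limsup_slices_nontrivial_of_WKM
    (n : ℕ) (hn : 2 ≤ n) (Λ : Set (Euc n)) (hΛsub : Λ ⊆ unitSphere n)
    (hΛcl : IsClosed Λ) (hWKM : WKM (unitSphere n \ Λ))
    (C : Set (Euc n)) (hC : IsCircle n C)
    (hCnot : ∀ x ∈ unitSphere n \ Λ,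
      ¬ C ⊆ closure (connectedComponentIn (unitSphere n \ Λ) x))
    (Ck : ℕ → Set (Euc n)) (hCk : ∀ k, IsCircle n (Ck k))
    (hconv : SetsConvergeTo Ck C) :
    ∃ a b, a ≠ b ∧ a ∈ setLimsup (fun k => Ck k ∩ Λ) ∧
      b ∈ setLimsup (fun k => Ck k ∩ Λ) := by
  classical
  set Om := unitSphere n \ Λ with hOmdef
  by_contra hcon
  push_neg at hcon
  have hsub : ∀ x ∈ setLimsup (fun k => Ck k ∩ Λ), ∀ y ∈ setLimsup (fun k => Ck k ∩ Λ),
      x = y := by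
    intro x hx y hy
    by_contra hne
    exact hcon x y hne hx hy
  have hCksub : ∀ k, Ck k ⊆ unitSphere n := by
    intro k
    obtain ⟨P, _, hEq, _⟩ := hCk k
    rw [hEq]; exact inter_subset_left
  have hCsub : C ⊆ unitSphere n := by
    obtain ⟨P, _, hEq, _⟩ := hC
    rw [hEq]; exact inter_subset_left
  have hCne : C.Nonempty := by
    obtain ⟨P, _, hEq, hinf⟩ := hC
    exact hinf.nonempty
  have hCkne : ∀ k, (Ck k).Nonempty := by
    intro k
    obtain ⟨P, _, hEq, hinf⟩ := hCk k
    exact hinf.nonempty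
  have hsphB : Bornology.IsBounded (unitSphere n) := isBounded_sphere
  have hsphC : IsCompact (unitSphere n) := isCompact_sphere 0 1
  have hedist : ∀ k, EMetric.hausdorffEdist (Ck k) C ≠ ⊤ := fun k =>
    hausdorffEdist_ne_top_of_nonempty_of_bounded (hCkne k) hCne
      (hsphB.subset (hCksub k)) (hsphB.subset hCsub)
  set T : ℕ → Set (Euc n) := fun N => closure (⋃ k, ⋃ (_ : k ≥ N), Ck k ∩ Λ) with hTdef
  have hTL : setLimsup (fun k => Ck k ∩ Λ) = ⋂ N, T N := rfl
  have hTsub : ∀ N, T N ⊆ unitSphere n := by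
    intro N
    apply closure_minimal _ hsphC.isClosed
    exact iUnion₂_subset fun k _ => inter_subset_left.trans (hCksub k)
  have hTcomp : ∀ N, IsCompact (T N) := fun N =>
    hsphC.of_isClosed_subset isClosed_closure (hTsub N)
  have hstar : ∃ ξ : Euc n, ∀ ε > 0, ∀ᶠ k in Filter.atTop, Ck k ∩ Λ ⊆ ball ξ ε := by
    by_cases hev : ∃ N, ∀ k ≥ N, Ck k ∩ Λ = ∅
    · obtain ⟨N, hN⟩ := hev
      refine ⟨0, fun ε hε => ?_⟩
      filter_upwards [Filter.eventually_ge_atTop N] with k hk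
      rw [hN k hk]; exact empty_subset _
    · push_neg at hev
      have hTmono : ∀ N, T (N+1) ⊆ T N := by
        intro N
        apply closure_mono
        exact iUnion₂_subset fun k hk =>
          subset_iUnion₂ (s := fun k (_ : k ≥ N) => Ck k ∩ Λ) k (by omega)
      have hTne : ∀ N, (T N).Nonempty := by
        intro N
        obtain ⟨k, hk, hne⟩ := hev N
        obtain ⟨x, hx⟩ := hne
        exact ⟨x, subset_closure (mem_iUnion₂.2 ⟨k, hk, hx⟩)⟩
      obtain ⟨ξ, hξmem⟩ := IsCompact.nonempty_iInter_of_sequence_nonempty_isCompact_isClosed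
        T hTmono hTne (hTcomp 0) (fun N => isClosed_closure)
      refine ⟨ξ, fun ε hε => ?_⟩
      by_contra hcon2
      rw [Filter.not_eventually] at hcon2
      set T' : ℕ → Set (Euc n) :=
        fun N => closure (⋃ k, ⋃ (_ : k ≥ N), (Ck k ∩ Λ) \ ball ξ ε) with hT'def
      have hT'T : ∀ N, T' N ⊆ T N :=
        fun N => closure_mono (iUnion₂_mono fun k hk => diff_subset)
      have hT'mono : ∀ N, T' (N+1) ⊆ T' N := by
        intro N
        apply closure_mono
        exact iUnion₂_subset fun k hk =>
          subset_iUnion₂ (s := fun k (_ : k ≥ N) => (Ck k ∩ Λ) \ ball ξ ε) k (by omega)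
      have hT'ne : ∀ N, (T' N).Nonempty := by
        intro N
        obtain ⟨k, hknsub, hkN⟩ := (hcon2.and_eventually (Filter.eventually_ge_atTop N)).exists
        obtain ⟨x, hx, hxnb⟩ := not_subset.1 hknsub
        exact ⟨x, subset_closure (mem_iUnion₂.2 ⟨k, hkN, hx, hxnb⟩)⟩
      obtain ⟨η, hηmem⟩ := IsCompact.nonempty_iInter_of_sequence_nonempty_isCompact_isClosed
        T' hT'mono hT'ne ((hTcomp 0).of_isClosed_subset isClosed_closure (hT'T 0))
        (fun N => isClosed_closure)
      have hηL : η ∈ ⋂ N, T N := mem_iInter.2 fun N => hT'T N (mem_iInter.1 hηmem N)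
      have hηnb : η ∉ ball ξ ε := by
        have h1 : T' 0 ⊆ (ball ξ ε)ᶜ := by
          apply closure_minimal _ isOpen_ball.isClosed_compl
          exact iUnion₂_subset fun k hk => fun x hx => hx.2
        exact h1 (mem_iInter.1 hηmem 0)
      have : η = ξ := hsub η (hTL ▸ hηL) ξ (hTL ▸ hξmem)
      exact hηnb (this ▸ mem_ball_self hε)
  obtain ⟨ξ, hξ⟩ := hstar
  obtain ⟨p, u, v, r, hr, hu, hv, huv, hCpar⟩ := isCircle_param hC
  obtain ⟨q₁, q₃, hq₁C, hq₃C, hq₁ξ, hq₃ξ, hq₁₃⟩ := circle_far_points hu hv huv p r hr ξ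
  rw [← hCpar] at hq₁C hq₃C
  have hF := hWKM (r/2) (by positivity)
  have hchoice : ∀ j : ℕ, ∃ k, Metric.hausdorffDist (Ck k) C < min (r/8) (1/(j+1)) ∧
      Ck k ∩ Λ ⊆ ball ξ (min (r/2) (1/(j+1))) := by
    intro j
    have h1 : ∀ᶠ k in Filter.atTop, Metric.hausdorffDist (Ck k) C < min (r/8) (1/(j+1)) :=
      hconv.eventually (gt_mem_nhds (by positivity))
    have h2 := hξ (min (r/2) (1/(j+1))) (by positivity)
    exact (h1.and h2).exists
  choose kj hkj1 hkj2 using hchoice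
  set εj : ℕ → ℝ := fun j => min (r/2) (1/(j+1)) with hεjdef
  have hεjpos : ∀ j, 0 < εj j := fun j => by positivity
  set D : ℕ → Set (Euc n) := fun j => Ck (kj j) \ closedBall ξ (εj j) with hDdef
  have hDOm : ∀ j, D j ⊆ Om := by
    intro j x hx
    refine ⟨hCksub _ hx.1, fun hxΛ => hx.2 ?_⟩
    exact ball_subset_closedBall (hkj2 j ⟨hx.1, hxΛ⟩)
  have hDpre : ∀ j, IsPreconnected (D j) := by
    intro j
    obtain ⟨p', u', v', r', hr', hu', hv', huv', hpar'⟩ := isCircle_param (hCk (kj j))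
    rw [hDdef]
    simp only
    rw [hpar']
    exact circle_diff_ball_preconnected hu' hv' huv' p' r' ξ (hεjpos j)
  have hx13 : ∀ j, ∃ x₁ x₃, x₁ ∈ D j ∧ x₃ ∈ D j ∧ r/2 < dist x₁ x₃ := by
    intro j
    have hhd : Metric.hausdorffDist (Ck (kj j)) C < r/8 :=
      (hkj1 j).trans_le (min_le_left _ _)
    obtain ⟨y₁, hy₁Ck, hy₁d⟩ := exists_dist_lt_of_hausdorffDist_lt' hq₁C hhd (hedist (kj j))
    obtain ⟨y₃, hy₃Ck, hy₃d⟩ := exists_dist_lt_of_hausdorffDist_lt' hq₃C hhd (hedist (kj j))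
    have hεjle : εj j ≤ r/2 := min_le_left _ _
    have hd1 : εj j < dist y₁ ξ := by
      have ht := dist_triangle q₁ y₁ ξ
      have hc1 : dist q₁ y₁ = dist y₁ q₁ := dist_comm _ _
      linarith
    have hd3 : εj j < dist y₃ ξ := by
      have ht := dist_triangle q₃ y₃ ξ
      have hc1 : dist q₃ y₃ = dist y₃ q₃ := dist_comm _ _
      linarith
    refine ⟨y₁, y₃, ⟨hy₁Ck, fun hmem => absurd (mem_closedBall.1 hmem) (not_le.2 hd1)⟩,
      ⟨hy₃Ck, fun hmem => absurd (mem_closedBall.1 hmem) (not_le.2 hd3)⟩, ?_⟩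
    have h4 := dist_triangle q₁ y₁ q₃
    have h5 := dist_triangle y₁ y₃ q₃
    have hc1 : dist q₁ y₁ = dist y₁ q₁ := dist_comm _ _
    have hc2 : dist y₃ q₃ = dist q₃ y₃ := dist_comm _ _
    linarith
  choose x₁ x₃ hx₁D hx₃D hx13d using hx13
  set V : ℕ → Set (Euc n) := fun j => connectedComponentIn Om (x₁ j) with hVdef
  have hDV : ∀ j, D j ⊆ V j :=
    fun j => (hDpre j).subset_connectedComponentIn (hx₁D j) (hDOm j)
  set F : Set (Set (Euc n)) :=
    {U | (∃ x ∈ Om, U = connectedComponentIn Om x) ∧ r/2 < Metric.diam U} with hFdef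
  have hVF : ∀ j, V j ∈ F := by
    intro j
    refine ⟨⟨x₁ j, hDOm j (hx₁D j), rfl⟩, ?_⟩
    have hVb : Bornology.IsBounded (V j) :=
      hsphB.subset ((connectedComponentIn_subset Om (x₁ j)).trans diff_subset)
    calc r/2 < dist (x₁ j) (x₃ j) := hx13d j
      _ ≤ Metric.diam (V j) := dist_le_diam_of_mem hVb (hDV j (hx₁D j)) (hDV j (hx₃D j))
  haveI : Finite ↥F := hF.to_subtype
  obtain ⟨U, hUfib⟩ := Finite.exists_infinite_fiber (fun j : ℕ => (⟨V j, hVF j⟩ : ↥F))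
  have hJinf : {j : ℕ | V j = (U : Set (Euc n))}.Infinite := by
    have h1 : ((fun j : ℕ => (⟨V j, hVF j⟩ : ↥F)) ⁻¹' {U}).Infinite :=
      Set.infinite_coe_iff.1 hUfib
    apply h1.mono
    intro j hj
    simp only [Set.mem_preimage, Set.mem_singleton_iff] at hj
    exact Set.mem_setOf_eq ▸ congrArg Subtype.val hj
  obtain ⟨⟨x0, hx0Om, hUeq⟩, hUdiam⟩ := U.2
  have hkey : ∀ c ∈ C, c ≠ ξ → c ∈ closure (U : Set (Euc n)) := by
    intro c hcC hcξ
    rw [Metric.mem_closure_iff]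
    intro δ hδ
    have hdpos : 0 < dist c ξ := dist_pos.2 hcξ
    obtain ⟨m, hm⟩ := exists_nat_one_div_lt (show 0 < min δ (dist c ξ / 2) by positivity)
    obtain ⟨j, hjJ, hjm⟩ := hJinf.exists_gt m
    have hj1 : 1/(j+1 : ℝ) < min δ (dist c ξ/2) := by
      have h1 : 1/(j+1 : ℝ) ≤ 1/(m+1 : ℝ) := by
        apply one_div_le_one_div_of_le (by positivity)
        have : (m : ℝ) ≤ (j : ℝ) := Nat.cast_le.2 hjm.le
        linarith
      linarith
    have hhd : Metric.hausdorffDist (Ck (kj j)) C < 1/(j+1) :=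
      (hkj1 j).trans_le (min_le_right _ _)
    obtain ⟨y, hyCk, hyd⟩ := exists_dist_lt_of_hausdorffDist_lt' hcC hhd (hedist (kj j))
    have hyc : dist y c < 1/(j+1 : ℝ) := hyd
    have hyD : y ∈ D j := by
      refine ⟨hyCk, fun hmem => ?_⟩
      have h1 := mem_closedBall.1 hmem
      have h2 : εj j ≤ 1/(j+1 : ℝ) := min_le_right _ _
      have h3 : (1:ℝ)/(j+1) < dist c ξ / 2 := lt_of_lt_of_le hj1 (min_le_right _ _)
      have h4 := dist_triangle c y ξ
      have h5 : dist c y = dist y c := dist_comm _ _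
      linarith
    have hyU : y ∈ (U : Set (Euc n)) := by
      have h4 := hDV j hyD
      rwa [hjJ] at h4
    exact ⟨y, hyU, by rw [dist_comm y c] at hyc
                      exact lt_of_lt_of_le (lt_of_lt_of_le hyc hj1.le) (min_le_left _ _)⟩
  have hCclU : C ⊆ closure (U : Set (Euc n)) := by
    intro c hcC
    by_cases hcξ : c = ξ
    · subst hcξ
      have hperf := circle_perfect hu hv huv p r hr c (hCpar ▸ hcC)
      rw [← hCpar] at hperf
      have hsub2 : C \ {c} ⊆ closure (U : Set (Euc n)) := fun z hz => hkey z hz.1 hz.2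
      have hstep := closure_mono hsub2 hperf
      rwa [closure_closure] at hstep
    · exact hkey c hcC hcξ
  exact hCnot x0 hx0Om (hUeq ▸ hCclU)
end
end

section
/- Let n, m ≥ 2. Let Λ ⊆ S^n be a nonempty closed doubly stable subset and let f : Λ → S^m be a continuous injective map with f(Λ) ≠ S^m. Then there exist a circle C in S^n, a codimension-one sphere S in S^m, and a point ξ ∈ Λ with ξ ∈ C and f(ξ) ∈ S, such that there is NO sequence of pairs (C_k, S_k), where C_k is a circle in S^n with C_k ∩ Λ ≠ ∅, S_k is a codimension-one sphere in S^m, and f(C_k ∩ Λ) ⊆ S_k, for which C_k converges to C and S_k converges to S. (This is the group-free form of the paper's Theorem 4.1: the Γ_ρ-orbit of a pair (C₀,S₀) with f(C₀ ∩ Λ) ⊆ S₀ consists of such pairs, so this statement implies that the orbit is not dense.) -/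
open Metric Set
open RealInnerProductSpace

noncomputable section

private lemma setLimsup_subset_closed' {X : Type*} [TopologicalSpace X] {T : ℕ → Set X}
    {A : Set X} (h : ∀ k, T k ⊆ A) (hA : IsClosed A) : setLimsup T ⊆ A := by
  intro z hz
  have hz0 : z ∈ closure (⋃ k ≥ 0, T k) := Set.mem_iInter.mp hz 0
  have hsub : (⋃ k ≥ 0, T k) ⊆ A := Set.iUnion₂_subset fun k _ => h k
  exact closure_minimal hsub hA hz0


set_option maxHeartbeats 1600000 in
/-- Group-free form of Theorem 4.1: for `Λ ⊆ S^n` nonempty closed doubly stable and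
`f : Λ → S^m` continuous injective with `f(Λ) ≠ S^m`, there are a circle `C`, a
codimension-one sphere `S` and `ξ ∈ Λ ∩ C` with `f ξ ∈ S` such that no sequence of
pairs `(C_k, S_k)` with `C_k ∩ Λ ≠ ∅` and `f(C_k ∩ Λ) ⊆ S_k` converges to `(C, S)`. -/

theorem no_dense_orbit_of_doublyStable
    (n m : ℕ) (hn : 2 ≤ n) (hm : 2 ≤ m)
    (Λ : Set (Euc n)) (hne : Λ.Nonempty) (hΛsub : Λ ⊆ unitSphere n)
    (hΛcl : IsClosed Λ) (hds : DoublyStable n Λ)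
    (f : Euc n → Euc m) (hfc : ContinuousOn f Λ) (hfi : Set.InjOn f Λ)
    (hfm : Set.MapsTo f Λ (unitSphere m)) (hfne : f '' Λ ≠ unitSphere m) :
    ∃ (C : Set (Euc n)) (S : Set (Euc m)) (ξ : Euc n),
      IsCircle n C ∧ IsCodimOneSphere m S ∧ ξ ∈ Λ ∧ ξ ∈ C ∧ f ξ ∈ S ∧
      ¬ ∃ (Ck : ℕ → Set (Euc n)) (Sk : ℕ → Set (Euc m)),
          (∀ k, IsCircle n (Ck k)) ∧ (∀ k, (Ck k ∩ Λ).Nonempty) ∧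
          (∀ k, IsCodimOneSphere m (Sk k)) ∧ (∀ k, f '' (Ck k ∩ Λ) ⊆ Sk k) ∧
          SetsConvergeTo Ck C ∧ SetsConvergeTo Sk S := by
  classical
  have hΛcp : IsCompact Λ :=
    isCompact_iff_isClosed_bounded.mpr ⟨hΛcl, isBounded_sphere.subset hΛsub⟩
  set K : Set (Euc m) := f '' Λ with hKdef
  have hKsub : K ⊆ unitSphere m := hfm.image_subset
  have hKcp : IsCompact K := hΛcp.image_of_continuousOn hfc
  have hKne : K.Nonempty := hne.image f
  -- two distinct points of Λ
  obtain ⟨ξ₀, hξ₀⟩ := hne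
  obtain ⟨C₀, hC₀, hξ₀C₀, hC₀st⟩ := hds ξ₀ hξ₀
  have hconst : SetsConvergeTo (fun _ : ℕ => C₀) C₀ := by
    have : (fun _ : ℕ => Metric.hausdorffDist C₀ C₀) = fun _ => (0 : ℝ) := by
      funext k; exact Metric.hausdorffDist_self_zero
    unfold SetsConvergeTo
    rw [this]
    exact tendsto_const_nhds
  obtain ⟨x₀, hx₀, y₀, hy₀, hxy₀⟩ := hC₀st (fun _ => C₀) (fun _ => hC₀) hconst
  have hsubΛ₀ : setLimsup (fun _ : ℕ => C₀ ∩ Λ) ⊆ Λ :=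
    setLimsup_subset_closed' (fun _ => Set.inter_subset_right) hΛcl
  have hx₀Λ : x₀ ∈ Λ := hsubΛ₀ hx₀
  have hy₀Λ : y₀ ∈ Λ := hsubΛ₀ hy₀
  -- a point q of the sphere not in K
  obtain ⟨q, hqS, hqK⟩ := Set.exists_of_ssubset (ssubset_of_subset_of_ne hKsub hfne)
  have hqn : ‖q‖ = 1 := mem_sphere_zero_iff_norm.mp hqS
  -- maximize ⟪q, ·⟫ over K
  have hcontinner : ContinuousOn (fun y : Euc m => (⟪q, y⟫ : ℝ)) K :=
    (continuous_const.inner continuous_id).continuousOn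
  obtain ⟨p, hpK, hpmax⟩ := hKcp.exists_isMaxOn hKne hcontinner
  have hpn : ‖p‖ = 1 := mem_sphere_zero_iff_norm.mp (hKsub hpK)
  have hpq : p ≠ q := fun h => hqK (h ▸ hpK)
  set a : ℝ := ⟪q, p⟫ with hadef
  have hpp : (⟪p, p⟫ : ℝ) = 1 := by rw [real_inner_self_eq_norm_sq, hpn]; norm_num
  have ha1 : a < 1 := by
    have h1 : a ≤ 1 := by
      have := real_inner_le_norm q p
      rwa [hqn, hpn, one_mul] at this
    rcases h1.lt_or_eq with h | h
    · exact h
    · exact absurd ((inner_eq_one_iff_of_norm_eq_one hqn hpn).mp h).symm hpq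
  have ham : (-1 : ℝ) < a := by
    obtain ⟨z, hzK, hzq⟩ : ∃ z ∈ K, z ≠ -q := by
      by_cases h1 : f x₀ = -q
      · refine ⟨f y₀, Set.mem_image_of_mem f hy₀Λ, fun h => ?_⟩
        exact hxy₀ (hfi hx₀Λ hy₀Λ (h1.trans h.symm))
      · exact ⟨f x₀, Set.mem_image_of_mem f hx₀Λ, h1⟩
    have hzn : ‖z‖ = 1 := mem_sphere_zero_iff_norm.mp (hKsub hzK)
    have hqnn : ‖(-q : Euc m)‖ = 1 := by rw [norm_neg, hqn]
    have h1 : (⟪-q, z⟫ : ℝ) ≤ 1 := by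
      have := real_inner_le_norm (-q : Euc m) z
      rwa [hqnn, hzn, one_mul] at this
    have h2 : (⟪-q, z⟫ : ℝ) ≠ 1 := fun h =>
      hzq ((inner_eq_one_iff_of_norm_eq_one hqnn hzn).mp h).symm
    have h3 : (⟪-q, z⟫ : ℝ) < 1 := lt_of_le_of_ne h1 h2
    rw [inner_neg_left] at h3
    have h4 : (-1 : ℝ) < ⟪q, z⟫ := by linarith
    exact lt_of_lt_of_le h4 (hpmax hzK)
  -- the direction v
  set u : Euc m := q + p with hudef
  have hun : ‖u‖ ^ 2 = 2 + 2 * a := by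
    rw [hudef, norm_add_sq_real, hqn, hpn, ← hadef]; ring
  have hupos : 0 < ‖u‖ := by nlinarith [norm_nonneg u]
  set v : Euc m := ‖u‖⁻¹ • u with hvdef
  have hvn : ‖v‖ = 1 := by
    rw [hvdef, norm_smul, Real.norm_eq_abs, abs_of_pos (inv_pos.mpr hupos)]
    field_simp
  have hvv : (⟪v, v⟫ : ℝ) = 1 := by rw [real_inner_self_eq_norm_sq, hvn]; norm_num
  have hvu : ∀ y : Euc m, (⟪v, y⟫ : ℝ) = ‖u‖⁻¹ * ⟪u, y⟫ := fun y => by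
    rw [hvdef, real_inner_smul_left]
  have huP : (⟪u, p⟫ : ℝ) = a + 1 := by rw [hudef, inner_add_left, ← hadef, hpp]
  set t : ℝ := ⟪v, p⟫ with htdef
  have hinner_le_one : ∀ y ∈ K, (⟪p, y⟫ : ℝ) ≤ 1 := by
    intro y hy
    have hyn : ‖y‖ = 1 := mem_sphere_zero_iff_norm.mp (hKsub hy)
    have := real_inner_le_norm p y
    rwa [hpn, hyn, one_mul] at this
  have hkey : ∀ y ∈ K, (⟪v, y⟫ : ℝ) ≤ t := by
    intro y hy
    rw [htdef, hvu, hvu]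
    have h1 : (⟪q, y⟫ : ℝ) ≤ a := hpmax hy
    have h2 : (⟪p, y⟫ : ℝ) ≤ 1 := hinner_le_one y hy
    have h3 : (⟪u, y⟫ : ℝ) ≤ ⟪u, p⟫ := by
      rw [huP, hudef, inner_add_left]; linarith
    exact mul_le_mul_of_nonneg_left h3 (inv_nonneg.mpr hupos.le)
  have hkeyeq : ∀ y ∈ K, (⟪v, y⟫ : ℝ) = t → y = p := by
    intro y hy heq
    have hyn : ‖y‖ = 1 := mem_sphere_zero_iff_norm.mp (hKsub hy)
    rw [htdef, hvu, hvu] at heq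
    have h3 : (⟪u, y⟫ : ℝ) = ⟪u, p⟫ :=
      mul_left_cancel₀ (inv_ne_zero hupos.ne') heq
    rw [huP, hudef, inner_add_left] at h3
    have h1 : (⟪q, y⟫ : ℝ) ≤ a := hpmax hy
    have h2 : (⟪p, y⟫ : ℝ) ≤ 1 := hinner_le_one y hy
    have h4 : (⟪p, y⟫ : ℝ) = 1 := by linarith
    exact ((inner_eq_one_iff_of_norm_eq_one hpn hyn).mp h4).symm
  -- bounds on t
  have ht0 : 0 < t := by
    rw [htdef, hvu, huP]
    exact mul_pos (inv_pos.mpr hupos) (by linarith)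
  have ht1 : t < 1 := by
    have hle : t ≤ 1 := by
      have := real_inner_le_norm v p
      rw [hvn, hpn, one_mul] at this
      exact this
    rcases hle.lt_or_eq with h | h
    · exact h
    exfalso
    have hvp : v = p := (inner_eq_one_iff_of_norm_eq_one hvn hpn).mp h
    have h5 : u = ‖u‖ • p := by
      rw [← hvp, hvdef, smul_smul]
      field_simp
      rw [one_smul]
    have h6 : q = (‖u‖ - 1) • p := by
      have hq' : q = u - p := by rw [hudef]; abel
      rw [sub_smul, one_smul, ← h5]; exact hq' 
    have h7 : a = ‖u‖ - 1 := by
      rw [hadef, h6, real_inner_smul_left, hpp, mul_one]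
    have h8 : ‖q‖ = |‖u‖ - 1| := by
      rw [h6, norm_smul, hpn, mul_one, Real.norm_eq_abs]
    have h9 : (1 : ℝ) = |‖u‖ - 1| := by rw [← h8, hqn]
    have h10 : (‖u‖ - 1) ^ 2 = 1 := by
      rw [← sq_abs, ← h9]; norm_num
    nlinarith
  have hvne : v ≠ 0 := fun h => by rw [h, norm_zero] at hvn; norm_num at hvn
  clear_value a u v t
  -- the hyperplane H and the sphere S
  set W : Submodule ℝ (Euc m) := (Submodule.span ℝ {v})ᗮ with hWdef
  have hWrank : Module.finrank ℝ W = m := by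
    have h1 := Submodule.finrank_add_finrank_orthogonal (Submodule.span ℝ {v})
    rw [finrank_span_singleton hvne, finrank_euclideanSpace_fin] at h1
    rw [hWdef]
    omega
  set H : AffineSubspace ℝ (Euc m) := AffineSubspace.mk' (t • v) W with hHdef
  have hHmem : ∀ x : Euc m, x ∈ H ↔ (⟪v, x⟫ : ℝ) = t := by
    intro x
    rw [hHdef, AffineSubspace.mem_mk', hWdef]
    rw [Submodule.mem_orthogonal_singleton_iff_inner_right]
    have : x -ᵥ t • v = x - t • v := rfl
    rw [this, inner_sub_right, real_inner_smul_right, hvv, mul_one, sub_eq_zero]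
  set S : Set (Euc m) := unitSphere m ∩ (H : Set (Euc m)) with hSdef
  have hpmemH : p ∈ H := (hHmem p).mpr htdef.symm
  have hpmemS : p ∈ S := ⟨hKsub hpK, hpmemH⟩
  -- S is infinite
  have hfdW : FiniteDimensional ℝ W := inferInstance
  have hSinf : S.Infinite := by
    set b := stdOrthonormalBasis ℝ W with hbdef
    have h2W : 2 ≤ Module.finrank ℝ W := le_of_le_of_eq hm hWrank.symm
    set i0 : Fin (Module.finrank ℝ W) := ⟨0, by omega⟩ with hi0
    set i1 : Fin (Module.finrank ℝ W) := ⟨1, by omega⟩ with hi1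
    have hij : i0 ≠ i1 := by
      intro h
      rw [hi0, hi1, Fin.mk.injEq] at h
      exact absurd h (by norm_num)
    set e₁ : Euc m := (b i0 : Euc m) with he1def
    set e₂ : Euc m := (b i1 : Euc m) with he2def
    have he₁W : e₁ ∈ W := (b i0).2
    have he₂W : e₂ ∈ W := (b i1).2
    have he₁n : ‖e₁‖ = 1 := b.orthonormal.1 i0
    have he₂n : ‖e₂‖ = 1 := b.orthonormal.1 i1
    have h12 : (⟪e₁, e₂⟫ : ℝ) = 0 := by
      have h : (⟪b i0, b i1⟫ : ℝ) = 0 := b.orthonormal.2 hij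
      rw [Submodule.coe_inner] at h
      exact h
    have hve₁ : (⟪v, e₁⟫ : ℝ) = 0 := by
      have h := he₁W
      rw [hWdef, Submodule.mem_orthogonal_singleton_iff_inner_right] at h
      exact h
    have hve₂ : (⟪v, e₂⟫ : ℝ) = 0 := by
      have h := he₂W
      rw [hWdef, Submodule.mem_orthogonal_singleton_iff_inner_right] at h
      exact h
    have he11 : (⟪e₁, e₁⟫ : ℝ) = 1 := by
      rw [real_inner_self_eq_norm_sq, he₁n]; norm_num
    clear_value e₁ e₂
    set s0 : ℝ := Real.sqrt (1 - t ^ 2) with hs0def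
    have ht2 : t ^ 2 < 1 := by nlinarith
    have hs0pos : 0 < s0 := Real.sqrt_pos.mpr (by nlinarith)
    have hs0sq : s0 ^ 2 = 1 - t ^ 2 := Real.sq_sqrt (by nlinarith)
    clear_value s0
    set g : ℝ → Euc m :=
      fun θ => t • v + ((s0 * Real.cos θ) • e₁ + (s0 * Real.sin θ) • e₂) with hgdef
    have hginner : ∀ θ, (⟪v, g θ⟫ : ℝ) = t := by
      intro θ
      rw [hgdef]
      simp only [inner_add_right, real_inner_smul_right, hvv, hve₁, hve₂]
      ring
    have hgnorm : ∀ θ, ‖g θ‖ = 1 := by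
      intro θ
      have hA : ‖t • v‖ ^ 2 = t ^ 2 := by
        rw [norm_smul, hvn, mul_one, Real.norm_eq_abs, sq_abs]
      have hB : ‖(s0 * Real.cos θ) • e₁‖ ^ 2 = (s0 * Real.cos θ) ^ 2 := by
        rw [norm_smul, he₁n, mul_one, Real.norm_eq_abs, sq_abs]
      have hCn : ‖(s0 * Real.sin θ) • e₂‖ ^ 2 = (s0 * Real.sin θ) ^ 2 := by
        rw [norm_smul, he₂n, mul_one, Real.norm_eq_abs, sq_abs]
      have hAB : (⟪t • v, (s0 * Real.cos θ) • e₁ + (s0 * Real.sin θ) • e₂⟫ : ℝ) = 0 := by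
        rw [inner_add_right, real_inner_smul_left, real_inner_smul_left,
          real_inner_smul_right, real_inner_smul_right, hve₁, hve₂]
        ring
      have hBC : (⟪(s0 * Real.cos θ) • e₁, (s0 * Real.sin θ) • e₂⟫ : ℝ) = 0 := by
        rw [real_inner_smul_left, real_inner_smul_right, h12]; ring
      have hsq : ‖g θ‖ ^ 2 = 1 := by
        rw [hgdef]
        rw [norm_add_sq_real, hAB, hA, norm_add_sq_real, hBC, hB, hCn]
        have hsc := Real.sin_sq_add_cos_sq θ
        nlinarith
      nlinarith [norm_nonneg (g θ)]
    have hgmemS : ∀ θ, g θ ∈ S := by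
      intro θ
      rw [hSdef]
      exact ⟨mem_sphere_zero_iff_norm.mpr (hgnorm θ), (hHmem _).mpr (hginner θ)⟩
    have hg1 : ∀ θ, (⟪e₁, g θ⟫ : ℝ) = s0 * Real.cos θ := by
      intro θ
      rw [hgdef]
      simp only [inner_add_right, real_inner_smul_right]
      have hev : (⟪e₁, v⟫ : ℝ) = 0 := by rw [real_inner_comm]; exact hve₁
      rw [hev, he11, h12]
      ring
    have hInj : Set.InjOn g (Set.Icc 0 Real.pi) := by
      intro θ₁ h₁ θ₂ h₂ heq
      have h3 : (⟪e₁, g θ₁⟫ : ℝ) = ⟪e₁, g θ₂⟫ := by rw [heq]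
      rw [hg1, hg1] at h3
      have h4 : Real.cos θ₁ = Real.cos θ₂ := mul_left_cancel₀ hs0pos.ne' h3
      exact Real.injOn_cos h₁ h₂ h4
    have hIccInf : (Set.Icc (0 : ℝ) Real.pi).Infinite := Set.Icc_infinite Real.pi_pos
    refine Set.Infinite.mono ?_ (hIccInf.image hInj)
    intro x hx
    obtain ⟨θ, _, rfl⟩ := hx
    exact hgmemS θ
  -- the point ξ and its stable circle
  obtain ⟨ξ, hξΛ, hfξ⟩ := hpK
  obtain ⟨C, hC, hξC, hCst⟩ := hds ξ hξΛ
  have hScodim : IsCodimOneSphere m S := by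
    refine ⟨H, ?_, hSdef, hSinf⟩
    rw [hHdef, AffineSubspace.direction_mk']
    exact hWrank
  have hSclosed : IsClosed S := by
    rw [hSdef]
    exact (show IsClosed (unitSphere m) from isClosed_sphere).inter
      (AffineSubspace.closed_of_finiteDimensional H)
  have hSne : S.Nonempty := ⟨p, hpmemS⟩
  have hSbd : Bornology.IsBounded S :=
    isBounded_sphere.subset
      (show S ⊆ Metric.sphere (0 : Euc m) 1 from hSdef ▸ Set.inter_subset_left)
  refine ⟨C, S, ξ, hC, hScodim, hξΛ, hξC, by rw [hfξ]; exact hpmemS, ?_⟩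
  rintro ⟨Ck, Sk, hCk, hCkΛ, hSk, hfsubk, hCconv, hSconv⟩
  obtain ⟨x, hx, y, hy, hxy⟩ := hCst Ck hCk hCconv
  have hmain : ∀ z ∈ setLimsup (fun k => Ck k ∩ Λ), z ∈ Λ ∧ f z ∈ S := by
    intro z hz
    have hzΛ : z ∈ Λ := setLimsup_subset_closed' (fun _ => Set.inter_subset_right) hΛcl hz
    refine ⟨hzΛ, ?_⟩
    rw [hSclosed.mem_iff_infDist_zero hSne]
    by_contra hcne
    have hεpos : 0 < infDist (f z) S := lt_of_le_of_ne infDist_nonneg (Ne.symm hcne)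
    set ε : ℝ := infDist (f z) S with hεdef
    obtain ⟨δ, hδpos, hδ⟩ :=
      Metric.continuousWithinAt_iff.mp (hfc z hzΛ) (ε / 2) (by positivity)
    obtain ⟨N, hN⟩ := Metric.tendsto_atTop.mp hSconv (ε / 2) (by positivity)
    have hzN : z ∈ closure (⋃ k ≥ N, Ck k ∩ Λ) := Set.mem_iInter.mp hz N
    obtain ⟨w, hwU, hwd⟩ := Metric.mem_closure_iff.mp hzN δ hδpos
    simp only [Set.mem_iUnion, exists_prop] at hwU
    obtain ⟨k, hkN, hwk⟩ := hwU
    have hfw : f w ∈ Sk k := hfsubk k (Set.mem_image_of_mem f hwk)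
    have h1 : dist (f w) (f z) < ε / 2 := hδ hwk.2 (by rw [dist_comm]; exact hwd)
    obtain ⟨Hk, _, hSkeq, hSkinf⟩ := hSk k
    have hSkne : (Sk k).Nonempty := hSkinf.nonempty
    have hSkbd : Bornology.IsBounded (Sk k) :=
      isBounded_sphere.subset
        (show Sk k ⊆ Metric.sphere (0 : Euc m) 1 from hSkeq ▸ Set.inter_subset_left)
    have h2 : infDist (f w) S ≤ hausdorffDist (Sk k) S :=
      infDist_le_hausdorffDist_of_mem hfw
        (hausdorffEdist_ne_top_of_nonempty_of_bounded hSkne hSne hSkbd hSbd)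
    have h3 : hausdorffDist (Sk k) S < ε / 2 := by
      have h := hN k hkN
      rwa [Real.dist_0_eq_abs, abs_of_nonneg hausdorffDist_nonneg] at h
    have h4 : infDist (f z) S ≤ infDist (f w) S + dist (f z) (f w) :=
      infDist_le_infDist_add_dist
    have h1' : dist (f z) (f w) < ε / 2 := by rw [dist_comm]; exact h1
    have : ε < ε := by
      calc ε = infDist (f z) S := hεdef
        _ ≤ infDist (f w) S + dist (f z) (f w) := h4
        _ < ε / 2 + ε / 2 := by exact add_lt_add_of_le_of_lt (h2.trans h3.le) h1'
        _ = ε := by ring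
    exact absurd this (lt_irrefl ε)
  obtain ⟨hxΛ, hfxS⟩ := hmain x hx
  obtain ⟨hyΛ, hfyS⟩ := hmain y hy
  have hfxp : f x = p := hkeyeq _ (Set.mem_image_of_mem f hxΛ) ((hHmem _).mp hfxS.2)
  have hfyp : f y = p := hkeyeq _ (Set.mem_image_of_mem f hyΛ) ((hHmem _).mp hfyS.2)
  exact hxy (hfi hxΛ hyΛ (hfxp.trans hfyp.symm))
end
end

section
/- Let m ≥ 2 and let K be a nonempty compact subset of S^m with K ≠ S^m. Then there exists a codimension-one sphere S in S^m such that S ∩ K is a singleton. (This is the first step of the proof of the paper's Theorem 4.1: a minimal spherical cap centered at a suitable point contains K, and a sphere tangent to this cap at a farthest point of K meets K in exactly one point.) -/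
open Metric Set RealInnerProductSpace

noncomputable section

set_option maxHeartbeats 2000000 in
/-- A nonempty compact proper subset `K` of `S^m` is tangentially separated: there is
a codimension-one sphere in `S^m` meeting `K` in exactly one point. -/
theorem exists_codimOneSphere_inter_singleton
    (m : ℕ) (hm : 2 ≤ m) (K : Set (Euc m)) (hK : K.Nonempty)
    (hKc : IsCompact K) (hKsub : K ⊆ unitSphere m) (hKne : K ≠ unitSphere m) :
    ∃ S : Set (Euc m), IsCodimOneSphere m S ∧ ∃ p, S ∩ K = {p} := by
  have hnorm : ∀ x ∈ K, ‖x‖ = 1 := fun x hx => by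
    have := hKsub hx; simpa [unitSphere] using this
  -- Step 1: find y ∈ S^m \ K and x₀ ∈ K with x₀ + y ≠ 0.
  obtain ⟨y, hyS, hyK, x₀, hx₀K, hx₀y⟩ :
      ∃ y, ‖y‖ = 1 ∧ y ∉ K ∧ ∃ x₀ ∈ K, x₀ + y ≠ 0 := by
    obtain ⟨y₀, hy₀S, hy₀K⟩ : ∃ y₀, y₀ ∈ unitSphere m ∧ y₀ ∉ K := by
      by_contra h
      push_neg at h
      exact hKne (Subset.antisymm hKsub h)
    have hy₀n : ‖y₀‖ = 1 := by simpa [unitSphere] using hy₀S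
    by_cases hcase : ∃ x₀ ∈ K, x₀ + y₀ ≠ 0
    · obtain ⟨x₀, h1, h2⟩ := hcase
      exact ⟨y₀, hy₀n, hy₀K, x₀, h1, h2⟩
    · push_neg at hcase
      -- then K = {-y₀}
      obtain ⟨k₀, hk₀⟩ := hK
      have hk₀v : k₀ = -y₀ := eq_neg_of_add_eq_zero_left (hcase k₀ hk₀)
      have hKsing : K = {-y₀} := by
        apply Subset.antisymm
        · intro x hx
          simp only [mem_singleton_iff]
          exact eq_neg_of_add_eq_zero_left (hcase x hx)
        · intro x hx; simp only [mem_singleton_iff] at hx; rw [hx, ← hk₀v]; exact hk₀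
      -- pick y among three standard points, distinct from y₀ and -y₀
      set a : Euc m := EuclideanSpace.single (0 : Fin (m+1)) (1:ℝ) with ha
      set b : Euc m := -a with hb
      set c : Euc m := EuclideanSpace.single (1 : Fin (m+1)) (1:ℝ) with hc
      have hfin : (1 : Fin (m+1)) ≠ 0 := by
        have : (1:ℕ) < m + 1 := by omega
        simp [Fin.ext_iff, Nat.mod_eq_of_lt this]
      have hab : a ≠ b := by
        intro h
        have := congrArg (fun z : Euc m => z 0) h
        simp [ha, hb, EuclideanSpace.single_apply] at this
        norm_num at this
      have hac : a ≠ c := by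
        intro h
        have := congrArg (fun z : Euc m => z 0) h
        simp [ha, hc, EuclideanSpace.single_apply, hfin, show m ≠ 0 by omega] at this
      have hbc : b ≠ c := by
        intro h
        have := congrArg (fun z : Euc m => z 0) h
        simp [ha, hb, hc, EuclideanSpace.single_apply, hfin, show m ≠ 0 by omega] at this
      have hn : ∀ w ∈ ({a, b, c} : Set (Euc m)), ‖w‖ = 1 := by
        intro w hw
        rcases hw with rfl | rfl | rfl
        · simp [ha, EuclideanSpace.norm_single]
        · simp [ha, hb, EuclideanSpace.norm_single]
        · simp [hc, EuclideanSpace.norm_single]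
      have : ∃ w ∈ ({a, b, c} : Set (Euc m)), w ≠ y₀ ∧ w ≠ -y₀ := by
        by_cases h1 : a = y₀
        · by_cases h2 : b = -y₀
          · exact ⟨c, by simp, fun h => hac (h1 ▸ h ▸ rfl), fun h => hbc (h2 ▸ h ▸ rfl)⟩
          · exact ⟨b, by simp, fun h => hab (h1 ▸ h ▸ rfl), h2⟩
        · by_cases h2 : a = -y₀
          · by_cases h3 : b = y₀
            · exact ⟨c, by simp, fun h => hbc (h3 ▸ h ▸ rfl), fun h => hac (h2 ▸ h ▸ rfl)⟩
            · exact ⟨b, by simp, h3, fun h => hab (h2 ▸ h ▸ rfl)⟩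
          · exact ⟨a, by simp, h1, h2⟩
      obtain ⟨w, hw, hw1, hw2⟩ := this
      refine ⟨w, hn w hw, ?_, -y₀, by rw [hKsing]; rfl, ?_⟩
      · rw [hKsing]; simpa using hw2
      · intro h
        exact hw1 (neg_add_eq_zero.mp h).symm
  -- Step 2: maximize ⟪y, ·⟫ on K.
  have hcont : ContinuousOn (fun x : Euc m => ⟪y, x⟫) K :=
    (continuous_const.inner continuous_id).continuousOn
  obtain ⟨p, hpK, hpmax⟩ := hKc.exists_isMaxOn hK hcont
  have hpn : ‖p‖ = 1 := hnorm p hpK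
  have hx₀n : ‖x₀‖ = 1 := hnorm x₀ hx₀K
  set M : ℝ := ⟪y, p⟫ with hM
  have hmax : ∀ x ∈ K, ⟪y, x⟫ ≤ M := fun x hx => hpmax hx
  -- M > -1
  have hM1 : -1 < M := by
    have h0 : (0:ℝ) < ‖x₀ + y‖^2 := pow_pos (norm_pos_iff.mpr hx₀y) 2
    have hexp : ‖x₀ + y‖^2 = 2 + 2 * ⟪y, x₀⟫ := by
      rw [norm_add_sq_real, hx₀n, hyS, real_inner_comm]; ring
    have : -1 < ⟪y, x₀⟫ := by nlinarith
    exact lt_of_lt_of_le this (hmax x₀ hx₀K)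
  -- M < 1
  have hM2 : M < 1 := by
    have hyp : y ≠ p := fun h => hyK (h ▸ hpK)
    have h0 : (0:ℝ) < ‖y - p‖^2 :=
      pow_pos (norm_pos_iff.mpr (sub_ne_zero_of_ne hyp)) 2
    have hexp : ‖y - p‖^2 = 2 - 2 * M := by
      rw [norm_sub_sq_real, hyS, hpn, hM]; ring
    nlinarith
  set v : Euc m := y + p with hv
  have hvp : ⟪v, p⟫ = M + 1 := by
    rw [hv, inner_add_left, real_inner_self_eq_norm_sq, hpn]; ring
  have hvn : ‖v‖^2 = 2 + 2*M := by
    rw [hv, norm_add_sq_real, hyS, hpn, hM]; ring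
  have hvne : v ≠ 0 := by
    intro h
    rw [h] at hvn
    simp at hvn
    nlinarith
  set W : Submodule ℝ (Euc m) := (ℝ ∙ v)ᗮ with hW
  set H : AffineSubspace ℝ (Euc m) := AffineSubspace.mk' p W with hH
  have hmemH : ∀ x : Euc m, x ∈ H ↔ ⟪v, x⟫ = M + 1 := by
    intro x
    rw [hH, AffineSubspace.mem_mk']
    have : (x -ᵥ p : Euc m) = x - p := rfl
    rw [this, hW, Submodule.mem_orthogonal_singleton_iff_inner_right, inner_sub_right, hvp]
    constructor <;> intro h <;> linarith
  -- finrank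
  have hrank : Module.finrank ℝ W = m := by
    rw [hW]
    have h1 : Module.finrank ℝ (ℝ ∙ v) = 1 := finrank_span_singleton hvne
    have h2 := Submodule.finrank_add_finrank_orthogonal (K := (ℝ ∙ v : Submodule ℝ (Euc m)))
    have hE : Module.finrank ℝ (Euc m) = m + 1 := by simp [finrank_euclideanSpace]
    rw [hE] at h2
    omega
  set S : Set (Euc m) := unitSphere m ∩ (H : Set (Euc m)) with hS
  -- p ∈ S
  have hpS : p ∈ S := by
    constructor
    · simpa [unitSphere] using hpn
    · exact (hmemH p).mpr hvp
  -- S ∩ K = {p}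
  have hSK : S ∩ K = {p} := by
    apply Subset.antisymm
    · rintro x ⟨⟨hx1, hx2⟩, hxK⟩
      have hxn : ‖x‖ = 1 := by simpa [unitSphere] using hx1
      have hxv : ⟪v, x⟫ = M + 1 := (hmemH x).mp hx2
      have h1 : ⟪y, x⟫ + ⟪p, x⟫ = M + 1 := by
        rw [← inner_add_left]; exact hxv
      have h2 : ⟪y, x⟫ ≤ M := hmax x hxK
      have h3 : (1:ℝ) ≤ ⟪p, x⟫ := by linarith
      have h4 : ‖p - x‖^2 = 2 - 2 * ⟪p, x⟫ := by
        rw [norm_sub_sq_real, hpn, hxn]; ring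
      have h5 : ‖p - x‖^2 ≥ 0 := sq_nonneg _
      have h6 : ‖p - x‖ = 0 := by nlinarith [sq_nonneg ‖p - x‖]
      have : p - x = 0 := norm_eq_zero.mp h6
      simp only [mem_singleton_iff]
      exact (sub_eq_zero.mp this).symm
    · intro x hx
      simp only [mem_singleton_iff] at hx
      exact hx ▸ ⟨hpS, hpK⟩
  -- S is infinite
  have hSinf : S.Infinite := by
    -- orthonormal pair in W
    have hWfd : FiniteDimensional ℝ W := inferInstance
    have hW2 : 2 ≤ Module.finrank ℝ W := by omega
    let bb := stdOrthonormalBasis ℝ W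
    let e₁ : Euc m := (bb ⟨0, by omega⟩ : W)
    let e₂ : Euc m := (bb ⟨1, by omega⟩ : W)
    have he₁W : e₁ ∈ W := (bb ⟨0, by omega⟩ : W).2
    have he₂W : e₂ ∈ W := (bb ⟨1, by omega⟩ : W).2
    have he₁n : ‖e₁‖ = 1 := by
      exact bb.orthonormal.1 ⟨0, by omega⟩
    have he₂n : ‖e₂‖ = 1 := by
      exact bb.orthonormal.1 ⟨1, by omega⟩
    have he₁₂ : ⟪e₁, e₂⟫ = 0 := by
      exact bb.orthonormal.2 (i := ⟨0, by omega⟩) (j := ⟨1, by omega⟩) (by simp)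
    have hve₁ : ⟪v, e₁⟫ = 0 :=
      Submodule.mem_orthogonal_singleton_iff_inner_right.mp he₁W
    have hve₂ : ⟪v, e₂⟫ = 0 :=
      Submodule.mem_orthogonal_singleton_iff_inner_right.mp he₂W
    set r : ℝ := Real.sqrt ((2 - 2*M)/4) with hr
    have hrpos : 0 < r := Real.sqrt_pos.mpr (by linarith)
    have hr2 : r^2 = (2 - 2*M)/4 := Real.sq_sqrt (by linarith)
    set g : ℝ → Euc m := fun t =>
      (2:ℝ)⁻¹ • v + r • (Real.cos t • e₁ + Real.sin t • e₂) with hg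
    have hgmem : ∀ t, g t ∈ S := by
      intro t
      have hvv : ⟪v, v⟫ = 2 + 2*M := by rw [real_inner_self_eq_norm_sq, hvn]
      have hinner : ⟪v, g t⟫ = M + 1 := by
        simp only [hg, inner_add_right, real_inner_smul_right, hve₁, hve₂, hvv]
        ring
      have horth : ⟪(2:ℝ)⁻¹ • v, r • (Real.cos t • e₁ + Real.sin t • e₂)⟫ = 0 := by
        simp only [real_inner_smul_left, real_inner_smul_right, inner_add_right,
          hve₁, hve₂]
        ring
      have hpart1 : ‖(2:ℝ)⁻¹ • v‖^2 = (2 + 2*M)/4 := by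
        rw [norm_smul, mul_pow, hvn, Real.norm_eq_abs, abs_of_pos (by norm_num : (0:ℝ) < 2⁻¹)]
        ring
      have hpart2 : ‖Real.cos t • e₁ + Real.sin t • e₂‖^2 = 1 := by
        rw [norm_add_sq_real, real_inner_smul_left, real_inner_smul_right, he₁₂,
          norm_smul, norm_smul, mul_pow, mul_pow, he₁n, he₂n]
        simp only [Real.norm_eq_abs, sq_abs]
        have h6 : Real.cos t ^2 + Real.sin t ^2 = 1 := by
          rw [add_comm]; exact Real.sin_sq_add_cos_sq t
        nlinarith
      have hnormg : ‖g t‖^2 = 1 := by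
        simp only [hg]
        rw [norm_add_sq_real, horth, norm_smul r, mul_pow, hpart1, hpart2]
        simp only [Real.norm_eq_abs, sq_abs]
        nlinarith [hr2]
      constructor
      · have hg1 : ‖g t‖ = 1 := by nlinarith [norm_nonneg (g t)]
        simpa [unitSphere] using hg1
      · exact (hmemH (g t)).mpr hinner
    have hinj : Set.InjOn g (Set.Icc 0 Real.pi) := by
      intro s hs t ht hst
      have hc : ⟪e₁, g s⟫ = ⟪e₁, g t⟫ := by rw [hst]
      have h2 : ⟪e₁, e₁⟫ = 1 := by rw [real_inner_self_eq_norm_sq, he₁n]; norm_num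
      have h4 : ⟪e₁, v⟫ = 0 := by rw [real_inner_comm]; exact hve₁
      have hform : ∀ u, ⟪e₁, g u⟫ = r * Real.cos u := by
        intro u
        simp only [hg, inner_add_right, real_inner_smul_right, h4, h2, he₁₂]
        ring
      rw [hform, hform] at hc
      have : Real.cos s = Real.cos t := by
        exact mul_left_cancel₀ (ne_of_gt hrpos) hc
      exact Real.injOn_cos hs ht this
    have hicc : (Set.Icc (0:ℝ) Real.pi).Infinite := Set.Icc_infinite Real.pi_pos
    have himg : (g '' Set.Icc 0 Real.pi).Infinite := hicc.image hinj
    exact himg.mono (by rintro x ⟨t, _, rfl⟩; exact hgmem t)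
  refine ⟨S, ⟨H, ?_, hS, hSinf⟩, p, hSK⟩
  rw [hH, AffineSubspace.direction_mk']
  exact hrank
end
end

section
/- Let n ≥ 2 and let Λ ⊆ S^n be a closed subset such that the open set Ω = S^n \ Λ satisfies the weak Koebe–Maskit condition. If (C_k) is a sequence of circles in S^n converging to a circle C and C_k ∩ Λ = ∅ for every k, then there exists a connected component U of Ω with C ⊆ closure(U). (This is the base case in the proof of the paper's Lemma 4.5: circles disjoint from Λ of definite diameter must eventually lie in a single large component of Ω.) -/
open Metric Set

noncomputable section

open Bornology in
lemma IsCircle.subset_sphere {n : ℕ} {C : Set (Euc n)} (h : IsCircle n C) :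
    C ⊆ unitSphere n := by
  obtain ⟨P, -, hEq, -⟩ := h
  intro x hx
  rw [hEq] at hx
  exact hx.1

lemma IsCircle.infinite {n : ℕ} {C : Set (Euc n)} (h : IsCircle n C) : C.Infinite := by
  obtain ⟨P, -, -, h⟩ := h; exact h

lemma IsCircle.isConnected {n : ℕ} {C : Set (Euc n)} (h : IsCircle n C) :
    IsConnected C := by
  obtain ⟨P, hdim, hCeq, hinf⟩ := h
  have hne : C.Nonempty := hinf.nonempty
  have hPne : (P : Set (Euc n)).Nonempty := by
    obtain ⟨x, hx⟩ := hne
    exact ⟨x, (hCeq ▸ hx).2⟩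
  haveI : Nonempty P := hPne.to_subtype
  set q : Euc n := (EuclideanGeometry.orthogonalProjection P (0 : Euc n) : Euc n) with hq
  have hqP : q ∈ P := (EuclideanGeometry.orthogonalProjection P (0 : Euc n)).2
  have hortho : ∀ v ∈ P.direction, inner ℝ q v = (0 : ℝ) := by
    intro v hv
    have h1 := EuclideanGeometry.orthogonalProjection_vsub_mem_direction_orthogonal P (0 : Euc n)
    have h2 : (q : Euc n) ∈ P.directionᗮ := by
      simpa [vsub_eq_sub] using h1
    exact (Submodule.mem_orthogonal' _ _).1 h2 v hv
  have key : ∀ x ∈ P, ‖x‖ ^ 2 = ‖q‖ ^ 2 + ‖x - q‖ ^ 2 := by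
    intro x hx
    have hmem : x - q ∈ P.direction := AffineSubspace.vsub_mem_direction hx hqP
    have := norm_add_sq_real q (x - q)
    have hxq : q + (x - q) = x := by abel
    rw [hxq] at this
    rw [this, hortho _ hmem]; ring
  set r2 : ℝ := 1 - ‖q‖ ^ 2 with hr2
  have hxC : ∀ x ∈ C, ‖x - q‖ ^ 2 = r2 := by
    intro x hx
    rw [hCeq] at hx
    have hx1 : ‖x‖ = 1 := by
      have := hx.1
      simpa [unitSphere, mem_sphere_zero_iff_norm] using this
    have := key x hx.2
    rw [hx1] at this; simp at this; linarith
  have hr2pos : 0 < r2 := by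
    obtain ⟨x, hx, y, hy, hxy⟩ := hinf.nontrivial
    have hx2 := hxC x hx
    have hy2 := hxC y hy
    rcases lt_or_eq_of_le (sq_nonneg ‖x - q‖) with h | h
    · linarith [hx2]
    · exfalso
      have hx0 : x = q := by
        have h1 : ‖x - q‖ = 0 := by nlinarith [norm_nonneg (x - q)]
        exact sub_eq_zero.1 (norm_eq_zero.1 h1)
      have hy0 : y = q := by
        have h' : ‖y - q‖ ^ 2 = 0 := by rw [hy2, ← hx2, ← h]
        have h1 : ‖y - q‖ = 0 := by nlinarith [norm_nonneg (y - q)]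
        exact sub_eq_zero.1 (norm_eq_zero.1 h1)
      exact hxy (hx0.trans hy0.symm)
  set r : ℝ := Real.sqrt r2 with hrdef
  have hrpos : 0 < r := Real.sqrt_pos.2 hr2pos
  have hrsq : r ^ 2 = r2 := Real.sq_sqrt hr2pos.le
  set V := P.direction
  have himg : C = (fun v : V => q + (v : Euc n)) '' (Metric.sphere (0 : V) r) := by
    ext x
    constructor
    · intro hx
      have hmem : x - q ∈ V := AffineSubspace.vsub_mem_direction ((hCeq ▸ hx).2) hqP
      refine ⟨⟨x - q, hmem⟩, ?_, by simp⟩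
      rw [mem_sphere_zero_iff_norm]
      have h2 : ‖(⟨x - q, hmem⟩ : V)‖ ^ 2 = r2 := by
        have hcoe : ‖(⟨x - q, hmem⟩ : V)‖ = ‖x - q‖ := rfl
        rw [hcoe]; exact hxC x hx
      calc ‖(⟨x - q, hmem⟩ : V)‖ = Real.sqrt (‖(⟨x - q, hmem⟩ : V)‖ ^ 2) :=
              (Real.sqrt_sq (norm_nonneg _)).symm
        _ = Real.sqrt r2 := by rw [h2]
        _ = r := rfl
    · rintro ⟨v, hv, rfl⟩
      rw [mem_sphere_zero_iff_norm] at hv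
      have hxP : q + (v : Euc n) ∈ P := by
        have := AffineSubspace.vadd_mem_of_mem_direction v.2 hqP
        simpa [vadd_eq_add, add_comm] using this
      rw [hCeq]
      constructor
      · have hnorm : ‖q + (v : Euc n)‖ ^ 2 = 1 := by
          have := key _ hxP
          simp only [add_sub_cancel_left] at this
          have hcv : ‖(v : Euc n)‖ = r := hv
          rw [this, hcv, hrsq]; ring
        have : ‖q + (v : Euc n)‖ = 1 := by
          nlinarith [norm_nonneg (q + (v : Euc n))]
        simpa [unitSphere, mem_sphere_zero_iff_norm] using this
      · exact hxP
  have hrank : 1 < Module.rank ℝ V := by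
    have h2 := Module.finrank_eq_rank ℝ V
    rw [hdim] at h2
    rw [← h2]; exact_mod_cast one_lt_two
  have hconn : IsConnected (Metric.sphere (0 : V) r) := isConnected_sphere hrank 0 hrpos.le
  rw [himg]
  exact hconn.image _ (Continuous.continuousOn (continuous_const.add continuous_subtype_val))


/-- Base case of Lemma 4.5: if circles `C_k` disjoint from `Λ` converge to a circle
`C`, and `Ω = S^n \ Λ` satisfies WKM, then `C` is contained in the closure of a
single connected component of `Ω`. -/
theorem circle_subset_closure_component_of_disjoint
    (n : ℕ) (hn : 2 ≤ n) (Λ : Set (Euc n)) (hΛsub : Λ ⊆ unitSphere n)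
    (hΛcl : IsClosed Λ) (hWKM : WKM (unitSphere n \ Λ))
    (C : Set (Euc n)) (hC : IsCircle n C)
    (Ck : ℕ → Set (Euc n)) (hCk : ∀ k, IsCircle n (Ck k))
    (hconv : SetsConvergeTo Ck C) (hdisj : ∀ k, Ck k ∩ Λ = ∅) :
    ∃ x ∈ unitSphere n \ Λ,
      C ⊆ closure (connectedComponentIn (unitSphere n \ Λ) x) := by
  classical
  set Ω : Set (Euc n) := unitSphere n \ Λ with hΩ
  obtain ⟨a, ha, b, hb, hab⟩ := hC.infinite.nontrivial
  set d : ℝ := dist a b with hd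
  have hdpos : 0 < d := dist_pos.2 hab
  have hsb : Bornology.IsBounded (unitSphere n) := isBounded_sphere
  have hCb : Bornology.IsBounded C := hsb.subset hC.subset_sphere
  have hCkb : ∀ k, Bornology.IsBounded (Ck k) := fun k => hsb.subset (hCk k).subset_sphere
  have hCne : C.Nonempty := hC.infinite.nonempty
  have hCkne : ∀ k, (Ck k).Nonempty := fun k => (hCk k).infinite.nonempty
  have hfin : ∀ k, EMetric.hausdorffEdist (Ck k) C ≠ ⊤ := fun k =>
    hausdorffEdist_ne_top_of_nonempty_of_bounded (hCkne k) hCne (hCkb k) hCb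
  have hCkΩ : ∀ k, Ck k ⊆ Ω := by
    intro k z hz
    refine ⟨(hCk k).subset_sphere hz, fun hzΛ => ?_⟩
    have h1 : z ∈ Ck k ∩ Λ := ⟨hz, hzΛ⟩
    rw [hdisj k] at h1
    exact h1
  choose x hx using hCkne
  have hxΩ : ∀ k, x k ∈ Ω := fun k => hCkΩ k (hx k)
  set U : ℕ → Set (Euc n) := fun k => connectedComponentIn Ω (x k) with hU
  have hCkU : ∀ k, Ck k ⊆ U k := fun k =>
    (hCk k).isConnected.isPreconnected.subset_connectedComponentIn (hx k) (hCkΩ k)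
  have hUb : ∀ k, Bornology.IsBounded (U k) := fun k =>
    hsb.subset ((connectedComponentIn_subset Ω (x k)).trans diff_subset)
  have hev : ∀ᶠ k in Filter.atTop, hausdorffDist (Ck k) C < d / 4 :=
    hconv.eventually_lt_const (by linarith)
  obtain ⟨N, hN⟩ := Filter.eventually_atTop.1 hev
  set S : Set (Set (Euc n)) :=
    {V : Set (Euc n) | (∃ y ∈ Ω, V = connectedComponentIn Ω y) ∧ d / 4 < Metric.diam V}
    with hS
  have hUmem : ∀ k, N ≤ k → U k ∈ S := by
    intro k hk
    refine ⟨⟨x k, hxΩ k, rfl⟩, ?_⟩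
    have hd1 : hausdorffDist C (Ck k) < d / 4 := by
      rw [hausdorffDist_comm]; exact hN k hk
    have hfin' : EMetric.hausdorffEdist C (Ck k) ≠ ⊤ := by
      rw [EMetric.hausdorffEdist, EMetric.hausdorffEdist_comm]; exact hfin k
    obtain ⟨a', ha', haa'⟩ := exists_dist_lt_of_hausdorffDist_lt ha hd1 hfin'
    obtain ⟨b', hb', hbb'⟩ := exists_dist_lt_of_hausdorffDist_lt hb hd1 hfin'
    have h1 : d / 2 ≤ dist a' b' := by
      have t1 := dist_triangle a a' b
      have t2 := dist_triangle a' b' b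
      have c1 : dist b' b = dist b b' := dist_comm _ _
      linarith
    have h2 : dist a' b' ≤ Metric.diam (U k) :=
      dist_le_diam_of_mem (hUb k) (hCkU k ha') (hCkU k hb')
    linarith
  have hSfin : S.Finite := hWKM (d / 4) (by linarith)
  haveI := hSfin.to_subtype
  set f : ℕ → ↥S := fun k => ⟨U (k + N), hUmem (k + N) (by omega)⟩ with hf
  obtain ⟨y, hy⟩ := Finite.exists_infinite_fiber f
  have hyinf : (f ⁻¹' {y}).Infinite := Set.infinite_coe_iff.1 hy
  obtain ⟨k₀, hk₀⟩ := hyinf.nonempty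
  refine ⟨x (k₀ + N), hxΩ _, ?_⟩
  intro ξ hξ
  rw [Metric.mem_closure_iff]
  intro δ hδ
  obtain ⟨M, hM⟩ := Filter.eventually_atTop.1 (hconv.eventually_lt_const hδ)
  obtain ⟨k₁, hk₁mem, hk₁gt⟩ := hyinf.exists_gt M
  have hdist : hausdorffDist C (Ck (k₁ + N)) < δ := by
    rw [hausdorffDist_comm]; exact hM _ (by omega)
  have hfin' : EMetric.hausdorffEdist C (Ck (k₁ + N)) ≠ ⊤ := by
    rw [EMetric.hausdorffEdist, EMetric.hausdorffEdist_comm]; exact hfin _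
  obtain ⟨z, hz, hzd⟩ := exists_dist_lt_of_hausdorffDist_lt hξ hdist hfin'
  refine ⟨z, ?_, hzd⟩
  have hEqU : U (k₁ + N) = U (k₀ + N) := by
    have e1 : f k₁ = y := hk₁mem
    have e0 : f k₀ = y := hk₀
    exact congrArg Subtype.val (e1.trans e0.symm)
  show z ∈ U (k₀ + N)
  exact hEqU ▸ hCkU _ hz
end
end
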